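/- Let n ≥ 1 and β > 0, and let H_{kl} ∈ ℝ^{n×n} (k,l ∈ {1,2,3,4}) satisfy H_{kl}ᵀ = H_{lk} and the monotonicity condition (so that H₃₃ and H₄₄ are negative definite and hence invertible). Then the symmetric matrices −H₁₁ + H₁₃H₃₃⁻¹H₃₁ + H₁₄H₄₄⁻¹H₄₁ and H₂₂ − H₂₃H₃₃⁻¹H₃₂ − H₂₄H₄₄⁻¹H₄₂ are both negative definite. -/

import Mathlib

open Matrix

/-- Under the monotonicity condition, the symmetric matrices
`−H₁₁ + H₁₃H₃₃⁻¹H₃₁ + H₁₄H₄₄⁻¹H₄₁` and `H₂₂ − H₂₃H₃₃⁻¹H₃₂ − H₂₄H₄₄⁻¹H₄₂`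
are both negative definite. -/
theorem stmt_1 (n : ℕ) (hn : 1 ≤ n) (β : ℝ) (hβ : 0 < β)
    (H11 H12 H13 H14 H21 H22 H23 H24 H31 H32 H33 H41 H42 H44 :
      Matrix (Fin n) (Fin n) ℝ)
    (hsym11 : H11ᵀ = H11) (hsym12 : H12ᵀ = H21) (hsym13 : H13ᵀ = H31)
    (hsym14 : H14ᵀ = H41) (hsym22 : H22ᵀ = H22) (hsym23 : H23ᵀ = H32)
    (hsym24 : H24ᵀ = H42) (hsym33 : H33ᵀ = H33) (hsym44 : H44ᵀ = H44)
    (hmono : ∀ x y z θ : Fin n → ℝ,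
      -((H11.mulVec x + H12.mulVec y + H13.mulVec z + H14.mulVec θ) ⬝ᵥ x)
        + (H21.mulVec x + H22.mulVec y + H23.mulVec z + H24.mulVec θ) ⬝ᵥ y
        + (H31.mulVec x + H32.mulVec y + H33.mulVec z) ⬝ᵥ z
        + (H41.mulVec x + H42.mulVec y + H44.mulVec θ) ⬝ᵥ θ
        ≤ -β * (x ⬝ᵥ x + y ⬝ᵥ y + z ⬝ᵥ z + θ ⬝ᵥ θ)) :
    (-(-H11 + H13 * H33⁻¹ * H31 + H14 * H44⁻¹ * H41)).PosDef ∧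
      (-(H22 - H23 * H33⁻¹ * H32 - H24 * H44⁻¹ * H42)).PosDef := by
  have hpos : ∀ v : Fin n → ℝ, v ≠ 0 → 0 < v ⬝ᵥ v := fun v hv => by
    simpa using dotProduct_self_star_pos_iff.mpr hv
  have hnn : ∀ v : Fin n → ℝ, 0 ≤ v ⬝ᵥ v := fun v =>
    Finset.sum_nonneg fun i _ => mul_self_nonneg _
  -- (-H33) is positive definite
  have h33pd : (-H33).PosDef := by
    refine Matrix.PosDef.of_dotProduct_mulVec_pos (by rw [Matrix.IsHermitian, conjTranspose_eq_transpose_of_trivial,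
      Matrix.transpose_neg, hsym33]) fun z hz => ?_
    have h := hmono 0 0 z 0
    simp only [Matrix.mulVec_zero, add_zero, zero_add, dotProduct_zero,
      zero_dotProduct, neg_zero] at h
    have hzz : 0 < z ⬝ᵥ z := hpos z hz
    have : H33.mulVec z ⬝ᵥ z ≤ -β * (z ⬝ᵥ z) := by linarith
    have hlt : H33.mulVec z ⬝ᵥ z < 0 :=
      lt_of_le_of_lt this (by nlinarith)
    simp only [star_trivial, Matrix.neg_mulVec, dotProduct_neg, dotProduct_comm]
    linarith [dotProduct_comm (H33.mulVec z) z]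
  have h44pd : (-H44).PosDef := by
    refine Matrix.PosDef.of_dotProduct_mulVec_pos (by rw [Matrix.IsHermitian, conjTranspose_eq_transpose_of_trivial,
      Matrix.transpose_neg, hsym44]) fun θ hθ => ?_
    have h := hmono 0 0 0 θ
    simp only [Matrix.mulVec_zero, add_zero, zero_add, dotProduct_zero,
      zero_dotProduct, neg_zero] at h
    have hzz : 0 < θ ⬝ᵥ θ := hpos θ hθ
    have : H44.mulVec θ ⬝ᵥ θ ≤ -β * (θ ⬝ᵥ θ) := by linarith
    have hlt : H44.mulVec θ ⬝ᵥ θ < 0 :=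
      lt_of_le_of_lt this (by nlinarith)
    simp only [star_trivial, Matrix.neg_mulVec, dotProduct_neg, dotProduct_comm]
    linarith [dotProduct_comm (H44.mulVec θ) θ]
  -- invertibility
  have h33u : IsUnit H33 := by simpa using h33pd.isUnit.neg
  have h44u : IsUnit H44 := by simpa using h44pd.isUnit.neg
  have h33inv : H33 * H33⁻¹ = 1 :=
    Matrix.mul_nonsing_inv _ ((Matrix.isUnit_iff_isUnit_det _).mp h33u)
  have h44inv : H44 * H44⁻¹ = 1 :=
    Matrix.mul_nonsing_inv _ ((Matrix.isUnit_iff_isUnit_det _).mp h44u)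
  have h33invT : (H33⁻¹)ᵀ = H33⁻¹ := by
    rw [Matrix.transpose_nonsing_inv, hsym33]
  have h44invT : (H44⁻¹)ᵀ = H44⁻¹ := by
    rw [Matrix.transpose_nonsing_inv, hsym44]
  constructor
  · refine Matrix.PosDef.of_dotProduct_mulVec_pos ?_ fun x hx => ?_
    · show (-(-H11 + H13 * H33⁻¹ * H31 + H14 * H44⁻¹ * H41))ᴴ = _
      have : (-(-H11 + H13 * H33⁻¹ * H31 + H14 * H44⁻¹ * H41))ᵀ
          = -(-H11 + H13 * H33⁻¹ * H31 + H14 * H44⁻¹ * H41) := by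
        simp only [Matrix.transpose_neg, Matrix.transpose_add, Matrix.transpose_mul,
          hsym11, h33invT, h44invT, ← hsym13, ← hsym14, Matrix.transpose_transpose]
        rw [Matrix.mul_assoc, Matrix.mul_assoc]
      simpa [conjTranspose_eq_transpose_of_trivial] using this
    · have h := hmono x 0 (-(H33⁻¹ * H31).mulVec x) (-(H44⁻¹ * H41).mulVec x)
      have e3 : H33.mulVec (-(H33⁻¹ * H31).mulVec x) = -(H31.mulVec x) := by
        rw [Matrix.mulVec_neg, Matrix.mulVec_mulVec, ← Matrix.mul_assoc,
          h33inv, Matrix.one_mul]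
      have e4 : H44.mulVec (-(H44⁻¹ * H41).mulVec x) = -(H41.mulVec x) := by
        rw [Matrix.mulVec_neg, Matrix.mulVec_mulVec, ← Matrix.mul_assoc,
          h44inv, Matrix.one_mul]
      simp only [Matrix.mulVec_zero, add_zero, zero_add, dotProduct_zero,
        zero_dotProduct, neg_zero, e3, e4, add_neg_cancel, zero_dotProduct] at h
      have hxx : 0 < x ⬝ᵥ x := hpos x hx
      have hkey : -((H11.mulVec x + H13.mulVec (-(H33⁻¹ * H31).mulVec x)
          + H14.mulVec (-(H44⁻¹ * H41).mulVec x)) ⬝ᵥ x) < 0 := by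
        have hb : -β * (x ⬝ᵥ x + (-(H33⁻¹ * H31).mulVec x) ⬝ᵥ (-(H33⁻¹ * H31).mulVec x)
            + (-(H44⁻¹ * H41).mulVec x) ⬝ᵥ (-(H44⁻¹ * H41).mulVec x)) < 0 := by
          nlinarith [hnn (-(H33⁻¹ * H31).mulVec x), hnn (-(H44⁻¹ * H41).mulVec x)]
        linarith
      simp only [star_trivial]
      have expand : (-(-H11 + H13 * H33⁻¹ * H31 + H14 * H44⁻¹ * H41)).mulVec x
          = H11.mulVec x + H13.mulVec (-(H33⁻¹ * H31).mulVec x)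
            + H14.mulVec (-(H44⁻¹ * H41).mulVec x) := by
        simp only [Matrix.neg_mulVec, Matrix.add_mulVec, Matrix.mulVec_neg,
          Matrix.mulVec_mulVec, Matrix.mul_assoc]
        funext i; simp [Pi.neg_apply, Pi.add_apply]; ring
      rw [dotProduct_comm, expand]
      linarith
  · refine Matrix.PosDef.of_dotProduct_mulVec_pos ?_ fun y hy => ?_
    · show (-(H22 - H23 * H33⁻¹ * H32 - H24 * H44⁻¹ * H42))ᴴ = _
      have : (-(H22 - H23 * H33⁻¹ * H32 - H24 * H44⁻¹ * H42))ᵀ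
          = -(H22 - H23 * H33⁻¹ * H32 - H24 * H44⁻¹ * H42) := by
        simp only [Matrix.transpose_neg, Matrix.transpose_sub, Matrix.transpose_mul,
          hsym22, h33invT, h44invT, ← hsym23, ← hsym24, Matrix.transpose_transpose]
        rw [Matrix.mul_assoc, Matrix.mul_assoc]
      simpa [conjTranspose_eq_transpose_of_trivial] using this
    · have h := hmono 0 y (-(H33⁻¹ * H32).mulVec y) (-(H44⁻¹ * H42).mulVec y)
      have e3 : H33.mulVec (-(H33⁻¹ * H32).mulVec y) = -(H32.mulVec y) := by
        rw [Matrix.mulVec_neg, Matrix.mulVec_mulVec, ← Matrix.mul_assoc,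
          h33inv, Matrix.one_mul]
      have e4 : H44.mulVec (-(H44⁻¹ * H42).mulVec y) = -(H42.mulVec y) := by
        rw [Matrix.mulVec_neg, Matrix.mulVec_mulVec, ← Matrix.mul_assoc,
          h44inv, Matrix.one_mul]
      simp only [Matrix.mulVec_zero, add_zero, zero_add, dotProduct_zero,
        zero_dotProduct, neg_zero, e3, e4, add_neg_cancel, zero_dotProduct] at h
      have hyy : 0 < y ⬝ᵥ y := hpos y hy
      have hkey : (H22.mulVec y + H23.mulVec (-(H33⁻¹ * H32).mulVec y)
          + H24.mulVec (-(H44⁻¹ * H42).mulVec y)) ⬝ᵥ y < 0 := by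
        have hb : -β * (y ⬝ᵥ y + (-(H33⁻¹ * H32).mulVec y) ⬝ᵥ (-(H33⁻¹ * H32).mulVec y)
            + (-(H44⁻¹ * H42).mulVec y) ⬝ᵥ (-(H44⁻¹ * H42).mulVec y)) < 0 := by
          nlinarith [hnn (-(H33⁻¹ * H32).mulVec y), hnn (-(H44⁻¹ * H42).mulVec y)]
        linarith
      simp only [star_trivial]
      have expand : (-(H22 - H23 * H33⁻¹ * H32 - H24 * H44⁻¹ * H42)).mulVec y
          = -(H22.mulVec y + H23.mulVec (-(H33⁻¹ * H32).mulVec y)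
            + H24.mulVec (-(H44⁻¹ * H42).mulVec y)) := by
        simp only [Matrix.neg_mulVec, Matrix.sub_mulVec, Matrix.mulVec_neg,
          Matrix.mulVec_mulVec, Matrix.mul_assoc]
        abel
      rw [dotProduct_comm, expand]
      simp only [neg_dotProduct]
      linarith
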